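/- Fix i ∈ {1,…,N} and fix the coordinates b_j for all j ≠ i of a strictly ordered bid profile. Then there is at most one t ∈ (b_{i−1}, b_{i+1}) (where b_0 := 0 and b_{N+1} := ∞) such that, at the profile with b_i replaced by t and all waiting times W_k recomputed from the perturbed profile, the first-order equilibrium condition W_i = W̃_i holds. -/

import Mathlib

/-- Class expected waiting times `W_i` in the accumulating-priority M/G/1 queue
with class loads `ρ`, strictly ordered bid profile `b` and mean residual
service time `W0`, defined by Kleinrock's recursion
`W_i = (W₀/(1−ρ) − Σ_{k<i} ρ_k(1 − b_k/b_i)W_k) / (1 − Σ_{k≥i} ρ_k(1 − b_i/b_k))`. -/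
noncomputable def classW {N : ℕ} (ρ b : Fin N → ℝ) (W0 : ℝ) : Fin N → ℝ
  | i =>
    (W0 / (1 - ∑ k, ρ k)
      - ∑ k : Fin N, if h : k < i then ρ k * (1 - b k / b i) * classW ρ b W0 k else 0)
    / (1 - ∑ k : Fin N, if i ≤ k then ρ k * (1 - b i / b k) else 0)
  termination_by i => i.val
  decreasing_by exact h

/-- The first-order-condition quantity
`W̃_i(b) = (1 − Σ_{k≥i} ρ_k(1 − b_i/b_k) − (C_i/b_i²)·Σ_{k<i} ρ_k b_k W_k) / (C_i·Σ_{k≥i} ρ_k/b_k)`. -/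
noncomputable def tildeW {N : ℕ} (ρ b C : Fin N → ℝ) (W0 : ℝ) (i : Fin N) : ℝ :=
  (1 - ∑ k : Fin N, (if i ≤ k then ρ k * (1 - b i / b k) else 0)
    - C i / (b i) ^ 2 * ∑ k : Fin N, (if k < i then ρ k * b k * classW ρ b W0 k else 0))
  / (C i * ∑ k : Fin N, (if i ≤ k then ρ k / b k else 0))


namespace APQaux

variable {N : ℕ}

/-- tail load `σ_n = Σ_{m ≥ n} ρ_m`. -/
noncomputable def sig (ρ : Fin N → ℝ) (n : ℕ) : ℝ := ∑ m, if n ≤ m.val then ρ m else 0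

/-- tail rate sum skipping `i`. -/
noncomputable def sml (ρ b : Fin N → ℝ) (i : Fin N) (n : ℕ) : ℝ :=
  ∑ m, if n ≤ m.val then (if m = i then 0 else ρ m / b m) else 0

noncomputable def gF (ρ b : Fin N → ℝ) (i : Fin N) (k : Fin N) : ℝ :=
  1 - sig ρ k.val + b k * sml ρ b i k.val

noncomputable def dF (ρ b : Fin N → ℝ) (i : Fin N) (x : ℝ) (k : Fin N) : ℝ :=
  gF ρ b i k + ρ i * b k / x

/-- residues of the partial fraction decomposition of `W_k` -/
noncomputable def rr (ρ b : Fin N → ℝ) (W0 : ℝ) (i : Fin N) : Fin N → Fin N → ℝ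
  | k, m =>
    if _ : m < k then
      (b m * ∑ j : Fin N, if hj : j < k then
          (if m ≤ j then ρ j * (1 - b j / b k) * rr ρ b W0 i j m else 0) else 0)
        / (b k * gF ρ b i m - b m * gF ρ b i k)
    else if m = k then W0 / (1 - sig ρ k.val) else 0
  termination_by k m => k.val
  decreasing_by exact hj

noncomputable def SmS (ρ b : Fin N → ℝ) (W0 : ℝ) (i : Fin N) (k m : Fin N) : ℝ :=
  ∑ j : Fin N, if m ≤ j ∧ j < k then ρ j * (1 - b j / b k) * rr ρ b W0 i j m else 0

lemma rr_lt (ρ b : Fin N → ℝ) (W0 : ℝ) (i : Fin N) {k m : Fin N} (h : m < k) :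
    rr ρ b W0 i k m = b m * SmS ρ b W0 i k m / (b k * gF ρ b i m - b m * gF ρ b i k) := by
  rw [rr, dif_pos h]
  congr 2
  apply Finset.sum_congr rfl
  intro j _
  by_cases hj : j < k
  · rw [dif_pos hj]
    by_cases hm : m ≤ j
    · rw [if_pos hm, if_pos ⟨hm, hj⟩]
    · rw [if_neg hm, if_neg (by tauto)]
  · rw [dif_neg hj, if_neg (by tauto)]

lemma rr_diag (ρ b : Fin N → ℝ) (W0 : ℝ) (i : Fin N) (k : Fin N) :
    rr ρ b W0 i k k = W0 / (1 - sig ρ k.val) := by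
  rw [rr, dif_neg (lt_irrefl k), if_pos rfl]

lemma rr_gt (ρ b : Fin N → ℝ) (W0 : ℝ) (i : Fin N) {k m : Fin N} (h : ¬ m ≤ k) :
    rr ρ b W0 i k m = 0 := by
  rw [rr, dif_neg (fun hc => h hc.le), if_neg (fun hc => h hc.le)]

/- generic sum lemmas -/
lemma sum_if_lt_zero (f : Fin N → ℝ) : (∑ j, if j.val < 0 then f j else 0) = 0 := by
  simp

lemma sum_if_lt_succ (f : Fin N → ℝ) {n : ℕ} (hn : n < N) :
    (∑ j, if j.val < n + 1 then f j else 0)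
      = (∑ j, if j.val < n then f j else 0) + f ⟨n, hn⟩ := by
  have h : ∀ j : Fin N, (if j.val < n + 1 then f j else 0)
      = (if j.val < n then f j else 0) + (if j = ⟨n, hn⟩ then f j else 0) := by
    intro j
    by_cases h1 : j.val < n
    · rw [if_pos (Nat.lt_succ_of_lt h1), if_pos h1, if_neg, add_zero]
      intro hc; rw [hc] at h1; simp at h1
    · by_cases h2 : j = ⟨n, hn⟩
      · rw [if_pos, if_neg h1, if_pos h2, zero_add]
        rw [h2]; simp
      · rw [if_neg, if_neg h1, if_neg h2, add_zero]
        intro hc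
        have hv : j.val = n := by omega
        exact h2 (Fin.ext hv)
  rw [Finset.sum_congr rfl (fun j _ => h j), Finset.sum_add_distrib,
    Finset.sum_ite_eq' Finset.univ (⟨n, hn⟩ : Fin N) f]
  simp

lemma sum_if_ge_succ (f : Fin N → ℝ) {n : ℕ} (hn : n < N) :
    (∑ j, if n ≤ j.val then f j else 0)
      = (∑ j, if n + 1 ≤ j.val then f j else 0) + f ⟨n, hn⟩ := by
  have h : ∀ j : Fin N, (if n ≤ j.val then f j else 0)
      = (if n + 1 ≤ j.val then f j else 0) + (if j = ⟨n, hn⟩ then f j else 0) := by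
    intro j
    by_cases h1 : n + 1 ≤ j.val
    · rw [if_pos h1, if_pos (by omega), if_neg, add_zero]
      intro hc; rw [hc] at h1; simp at h1
    · by_cases h2 : j = ⟨n, hn⟩
      · rw [if_pos, if_neg h1, if_pos h2, zero_add]
        rw [h2]
      · rw [if_neg, if_neg h1, if_neg h2, add_zero]
        intro hc
        have hv : j.val = n := by omega
        exact h2 (Fin.ext hv)
  rw [Finset.sum_congr rfl (fun j _ => h j), Finset.sum_add_distrib,
    Finset.sum_ite_eq' Finset.univ (⟨n, hn⟩ : Fin N) f]
  simp

lemma sum_if_le_split (f : Fin N → ℝ) (k : Fin N) :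
    (∑ j, if j ≤ k then f j else 0) = (∑ j, if j < k then f j else 0) + f k := by
  have h : ∀ j : Fin N, (if j ≤ k then f j else 0)
      = (if j < k then f j else 0) + (if j = k then f j else 0) := by
    intro j
    by_cases h1 : j < k
    · rw [if_pos h1.le, if_pos h1, if_neg (by rintro rfl; exact lt_irrefl _ h1), add_zero]
    · by_cases h2 : j = k
      · rw [if_pos h2.le, if_neg h1, if_pos h2, zero_add]
      · rw [if_neg, if_neg h1, if_neg h2, add_zero]
        intro hc
        rcases lt_or_eq_of_le hc with h | h
        exacts [h1 h, h2 h]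
  rw [Finset.sum_congr rfl (fun j _ => h j), Finset.sum_add_distrib,
    Finset.sum_ite_eq' Finset.univ k f]
  simp

end APQaux

namespace APQaux

variable {N : ℕ}

lemma sig_le (ρ : Fin N → ℝ) (hρ : ∀ k, 0 < ρ k) (n : ℕ) : sig ρ n ≤ ∑ k, ρ k := by
  apply Finset.sum_le_sum
  intro m _
  by_cases h : n ≤ m.val
  · rw [if_pos h]
  · rw [if_neg h]; exact (hρ m).le

lemma sig_lt_one (ρ : Fin N → ℝ) (hρ : ∀ k, 0 < ρ k) (hρsum : ∑ k, ρ k < 1) (n : ℕ) :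
    sig ρ n < 1 := lt_of_le_of_lt (sig_le ρ hρ n) hρsum

lemma sml_nonneg (ρ b : Fin N → ℝ) (i : Fin N) (hρ : ∀ k, 0 < ρ k) (hbpos : ∀ k, 0 < b k)
    (n : ℕ) : 0 ≤ sml ρ b i n := by
  apply Finset.sum_nonneg
  intro m _
  by_cases h : n ≤ m.val
  · rw [if_pos h]
    by_cases h2 : m = i
    · rw [if_pos h2]
    · rw [if_neg h2]
      exact (div_pos (hρ m) (hbpos m)).le
  · rw [if_neg h]

lemma gF_pos (ρ b : Fin N → ℝ) (i : Fin N) (hρ : ∀ k, 0 < ρ k) (hρsum : ∑ k, ρ k < 1)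
    (hbpos : ∀ k, 0 < b k) (k : Fin N) : 0 < gF ρ b i k := by
  have h1 := sig_lt_one ρ hρ hρsum k.val
  have h2 := sml_nonneg ρ b i hρ hbpos k.val
  have h3 := hbpos k
  unfold gF; nlinarith

lemma dF_pos (ρ b : Fin N → ℝ) (i : Fin N) (hρ : ∀ k, 0 < ρ k) (hρsum : ∑ k, ρ k < 1)
    (hbpos : ∀ k, 0 < b k) {x : ℝ} (hx : 0 < x) (k : Fin N) : 0 < dF ρ b i x k := by
  have h1 := gF_pos ρ b i hρ hρsum hbpos k
  have h2 : 0 < ρ i * b k / x := div_pos (mul_pos (hρ i) (hbpos k)) hx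
  unfold dF; linarith

lemma sig_zero (ρ : Fin N → ℝ) : sig ρ 0 = ∑ k, ρ k := by
  unfold sig
  apply Finset.sum_congr rfl
  intro m _
  rw [if_pos (Nat.zero_le _)]

lemma sig_succ (ρ : Fin N → ℝ) {n : ℕ} (hn : n < N) : sig ρ n = sig ρ (n + 1) + ρ ⟨n, hn⟩ :=
  sum_if_ge_succ ρ hn

lemma sml_succ (ρ b : Fin N → ℝ) (i : Fin N) {n : ℕ} (hn : n < N)
    (hni : (⟨n, hn⟩ : Fin N) ≠ i) :
    sml ρ b i n = sml ρ b i (n + 1) + ρ ⟨n, hn⟩ / b ⟨n, hn⟩ := by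
  have := sum_if_ge_succ (fun m : Fin N => if m = i then 0 else ρ m / b m) hn
  unfold sml
  rw [this, if_neg hni]

lemma sig_diff (ρ : Fin N → ℝ) {m k : Fin N} (hmk : m < k) :
    sig ρ m.val - sig ρ k.val = ∑ j, if m.val ≤ j.val ∧ j.val < k.val then ρ j else 0 := by
  unfold sig
  rw [← Finset.sum_sub_distrib]
  apply Finset.sum_congr rfl
  intro j _
  have hmk' : m.val < k.val := hmk
  split_ifs with h1 h2 h3 h4 h5 <;> first | (exfalso; omega) | ring1

lemma sml_diff (ρ b : Fin N → ℝ) (i : Fin N) {m k : Fin N} (hmk : m < k) :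
    sml ρ b i m.val - sml ρ b i k.val
      = ∑ j, if m.val ≤ j.val ∧ j.val < k.val then (if j = i then 0 else ρ j / b j) else 0 := by
  unfold sml
  rw [← Finset.sum_sub_distrib]
  apply Finset.sum_congr rfl
  intro j _
  have hmk' : m.val < k.val := hmk
  split_ifs with h1 h2 h3 h4 h5 h6 h7 h8 <;> first | (exfalso; omega) | ring1

lemma Gamma_pos (ρ b : Fin N → ℝ) (i : Fin N) (hρ : ∀ k, 0 < ρ k) (hρsum : ∑ k, ρ k < 1)
    (hbpos : ∀ k, 0 < b k) (hbmono : StrictMono b) {m k : Fin N} (hmk : m < k) (hki : k ≤ i) :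
    0 < b k * gF ρ b i m - b m * gF ρ b i k := by
  have hbm := hbpos m
  have hbk := hbpos k
  have hbmk : b m < b k := hbmono hmk
  have hsig : sig ρ m.val < 1 := sig_lt_one ρ hρ hρsum m.val
  have key : b m * (sig ρ m.val - sig ρ k.val)
      ≤ b k * b m * (sml ρ b i m.val - sml ρ b i k.val) := by
    rw [sig_diff ρ hmk, sml_diff ρ b i hmk, Finset.mul_sum, Finset.mul_sum]
    apply Finset.sum_le_sum
    intro j _
    by_cases hc : m.val ≤ j.val ∧ j.val < k.val
    · rw [if_pos hc, if_pos hc]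
      have hji : j ≠ i := by
        intro hji
        have hki' : k.val ≤ i.val := hki
        have : j.val < i.val := by omega
        rw [hji] at this
        omega
      rw [if_neg hji]
      have hbj := hbpos j
      have hbjk : b j < b k := hbmono (show j < k from hc.2)
      have hρj := hρ j
      rw [div_eq_mul_inv]
      rw [show b k * b m * (ρ j * (b j)⁻¹) = b m * (ρ j * (b k * (b j)⁻¹)) by ring]
      have : (1:ℝ) ≤ b k * (b j)⁻¹ := by
        rw [le_mul_inv_iff₀ hbj]
        linarith
      nlinarith [mul_nonneg (mul_pos hbm hρj).le (sub_nonneg.mpr this)]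
    · rw [if_neg hc, if_neg hc, mul_zero, mul_zero]
  have hd := sig_diff ρ hmk
  unfold gF
  nlinarith [key]

end APQaux

namespace APQaux

variable {N : ℕ}

noncomputable def PF (ρ b : Fin N → ℝ) (W0 : ℝ) (i : Fin N) (x : ℝ) (n : ℕ) : ℝ :=
  ∑ j, if j.val < n then ρ j * classW ρ (Function.update b i x) W0 j else 0

noncomputable def QF (ρ b : Fin N → ℝ) (W0 : ℝ) (i : Fin N) (x : ℝ) (n : ℕ) : ℝ :=
  ∑ j, if j.val < n then ρ j * b j * classW ρ (Function.update b i x) W0 j else 0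

/-- unfolding of the recursion for a class strictly below `i`, at the perturbed profile. -/
lemma W_eq (ρ b : Fin N → ℝ) (W0 : ℝ) (i : Fin N) {x : ℝ} {k : Fin N} (hk : k < i) :
    classW ρ (Function.update b i x) W0 k
      = (W0 / (1 - ∑ m, ρ m)
          - ∑ j, if j < k then ρ j * (1 - b j / b k) * classW ρ (Function.update b i x) W0 j else 0)
        / dF ρ b i x k := by
  have hki : k ≠ i := ne_of_lt hk
  rw [classW]
  congr 1
  · congr 1
    apply Finset.sum_congr rfl
    intro j _
    by_cases hj : j < k
    · rw [dif_pos hj, if_pos hj,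
        Function.update_of_ne (ne_of_lt (lt_trans hj hk)), Function.update_of_ne hki]
    · rw [dif_neg hj, if_neg hj]
  · have expand : ∀ m : Fin N,
        (if k ≤ m then ρ m * (1 - Function.update b i x k / Function.update b i x m) else 0)
        = ((if k.val ≤ m.val then ρ m else 0)
            - b k * (if k.val ≤ m.val then (if m = i then 0 else ρ m / b m) else 0))
          - (if m = i then ρ i * b k / x else 0) := by
      intro m
      rw [Function.update_of_ne hki]
      by_cases hmi : m = i
      · subst hmi
        rw [if_pos (le_of_lt hk), if_pos (Fin.le_def.mp (le_of_lt hk)), if_pos rfl, if_pos rfl,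
          Function.update_self]
        simp only [ite_self]
        ring
      · rw [Function.update_of_ne hmi]
        by_cases hkm : k ≤ m
        · rw [if_pos hkm, if_pos (Fin.le_def.mp hkm), if_pos (Fin.le_def.mp hkm),
            if_neg hmi, if_neg hmi]
          ring
        · rw [if_neg hkm, if_neg (fun h => hkm (Fin.le_def.mpr h)),
            if_neg (fun h => hkm (Fin.le_def.mpr h)), if_neg hmi]
          ring
    rw [Finset.sum_congr rfl (fun m _ => expand m), Finset.sum_sub_distrib,
      Finset.sum_sub_distrib, ← Finset.mul_sum,
      Finset.sum_ite_eq' Finset.univ i (fun _ => ρ i * b k / x)]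
    simp only [Finset.mem_univ, if_true]
    unfold dF gF sig sml
    ring

/-- unfolding of the recursion at class `i` itself. -/
lemma Wi_eq (ρ b : Fin N → ℝ) (W0 : ℝ) (i : Fin N) {x : ℝ} (hx : x ≠ 0) :
    classW ρ (Function.update b i x) W0 i
      = (W0 / (1 - ∑ m, ρ m) - (PF ρ b W0 i x i.val - QF ρ b W0 i x i.val / x))
        / (1 - sig ρ i.val + ρ i + sml ρ b i i.val * x) := by
  rw [classW]
  congr 1
  · congr 1
    have expand : ∀ j : Fin N,
        (if _ : j < i then ρ j * (1 - Function.update b i x j / Function.update b i x i)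
            * classW ρ (Function.update b i x) W0 j else 0)
        = (if j.val < i.val then ρ j * classW ρ (Function.update b i x) W0 j else 0)
          - (if j.val < i.val then ρ j * b j * classW ρ (Function.update b i x) W0 j else 0) / x := by
      intro j
      by_cases hj : j < i
      · rw [dif_pos hj, if_pos (Fin.lt_def.mp hj), if_pos (Fin.lt_def.mp hj),
          Function.update_of_ne (ne_of_lt hj), Function.update_self]
        ring
      · rw [dif_neg hj, if_neg (fun h => hj (Fin.lt_def.mpr h)),
          if_neg (fun h => hj (Fin.lt_def.mpr h))]
        ring
    rw [Finset.sum_congr rfl (fun j _ => expand j), Finset.sum_sub_distrib, ← Finset.sum_div]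
    rfl
  · have expand : ∀ m : Fin N,
        (if i ≤ m then ρ m * (1 - Function.update b i x i / Function.update b i x m) else 0)
        = ((if i.val ≤ m.val then ρ m else 0)
            - x * (if i.val ≤ m.val then (if m = i then 0 else ρ m / b m) else 0))
          - (if m = i then ρ i else 0) := by
      intro m
      rw [Function.update_self]
      by_cases hmi : m = i
      · subst hmi
        rw [if_pos le_rfl, if_pos le_rfl, if_pos rfl, if_pos rfl, Function.update_self,
          div_self hx]
        simp only [ite_self]
        ring
      · rw [Function.update_of_ne hmi]
        by_cases him : i ≤ m
        · rw [if_pos him, if_pos (Fin.le_def.mp him), if_pos (Fin.le_def.mp him),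
            if_neg hmi, if_neg hmi]
          ring
        · rw [if_neg him, if_neg (fun h => him (Fin.le_def.mpr h)),
            if_neg (fun h => him (Fin.le_def.mpr h)), if_neg hmi]
          ring
    rw [Finset.sum_congr rfl (fun m _ => expand m), Finset.sum_sub_distrib,
      Finset.sum_sub_distrib, ← Finset.mul_sum,
      Finset.sum_ite_eq' Finset.univ i (fun _ => ρ i)]
    simp only [Finset.mem_univ, if_true]
    unfold sig sml
    ring

end APQaux

namespace APQaux

variable {N : ℕ}

lemma sum_geA (ρ b : Fin N → ℝ) (i : Fin N) {x : ℝ} (hx : x ≠ 0) :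
    (∑ m, if i ≤ m then ρ m * (1 - Function.update b i x i / Function.update b i x m) else 0)
      = sig ρ i.val - x * sml ρ b i i.val - ρ i := by
  have expand : ∀ m : Fin N,
      (if i ≤ m then ρ m * (1 - Function.update b i x i / Function.update b i x m) else 0)
      = ((if i.val ≤ m.val then ρ m else 0)
          - x * (if i.val ≤ m.val then (if m = i then 0 else ρ m / b m) else 0))
        - (if m = i then ρ i else 0) := by
    intro m
    rw [Function.update_self]
    by_cases hmi : m = i
    · subst hmi
      rw [if_pos le_rfl, if_pos le_rfl, if_pos rfl, if_pos rfl, Function.update_self,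
        div_self hx]
      simp only [ite_self]
      ring
    · rw [Function.update_of_ne hmi]
      by_cases him : i ≤ m
      · rw [if_pos him, if_pos (Fin.le_def.mp him), if_pos (Fin.le_def.mp him),
          if_neg hmi, if_neg hmi]
        ring
      · rw [if_neg him, if_neg (fun h => him (Fin.le_def.mpr h)),
          if_neg (fun h => him (Fin.le_def.mpr h)), if_neg hmi]
        ring
  rw [Finset.sum_congr rfl (fun m _ => expand m), Finset.sum_sub_distrib,
    Finset.sum_sub_distrib, ← Finset.mul_sum,
    Finset.sum_ite_eq' Finset.univ i (fun _ => ρ i)]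
  simp only [Finset.mem_univ, if_true]
  unfold sig sml
  ring

lemma tW_eq (ρ b C : Fin N → ℝ) (W0 : ℝ) (i : Fin N) {x : ℝ} (hx : x ≠ 0) :
    tildeW ρ (Function.update b i x) C W0 i
      = (1 - (sig ρ i.val - x * sml ρ b i i.val - ρ i) - C i / x ^ 2 * QF ρ b W0 i x i.val)
        / (C i * (ρ i / x + sml ρ b i i.val)) := by
  have hB : (∑ k, if k < i then ρ k * Function.update b i x k
        * classW ρ (Function.update b i x) W0 k else 0) = QF ρ b W0 i x i.val := by
    apply Finset.sum_congr rfl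
    intro k _
    by_cases hk : k < i
    · rw [if_pos hk, if_pos (Fin.lt_def.mp hk), Function.update_of_ne (ne_of_lt hk)]
    · rw [if_neg hk, if_neg (fun h => hk (Fin.lt_def.mpr h))]
  have hC : (∑ k, if i ≤ k then ρ k / Function.update b i x k else 0)
      = ρ i / x + sml ρ b i i.val := by
    have expand : ∀ m : Fin N,
        (if i ≤ m then ρ m / Function.update b i x m else 0)
        = (if i.val ≤ m.val then (if m = i then 0 else ρ m / b m) else 0)
          + (if m = i then ρ i / x else 0) := by
      intro m
      by_cases hmi : m = i
      · subst hmi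
        rw [if_pos le_rfl, if_pos le_rfl, if_pos rfl, if_pos rfl, Function.update_self,
          zero_add]
      · rw [Function.update_of_ne hmi, if_neg hmi, if_neg hmi, add_zero]
        by_cases him : i ≤ m
        · rw [if_pos him, if_pos (Fin.le_def.mp him)]
        · rw [if_neg him, if_neg (fun h => him (Fin.le_def.mpr h))]
    rw [Finset.sum_congr rfl (fun m _ => expand m), Finset.sum_add_distrib,
      Finset.sum_ite_eq' Finset.univ i (fun _ => ρ i / x)]
    simp only [Finset.mem_univ, if_true]
    unfold sml
    ring
  unfold tildeW
  rw [sum_geA ρ b i hx, hB, hC, Function.update_self]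

lemma numalg (ρ b : Fin N → ℝ) (W0 : ℝ) (i : Fin N) (x : ℝ) (k : Fin N) :
    (∑ j, if j < k then ρ j * (1 - b j / b k) * classW ρ (Function.update b i x) W0 j else 0)
      = PF ρ b W0 i x k.val - QF ρ b W0 i x k.val / b k := by
  have expand : ∀ j : Fin N,
      (if j < k then ρ j * (1 - b j / b k) * classW ρ (Function.update b i x) W0 j else 0)
      = (if j.val < k.val then ρ j * classW ρ (Function.update b i x) W0 j else 0)
        - (if j.val < k.val then ρ j * b j * classW ρ (Function.update b i x) W0 j else 0) / b k := by
    intro j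
    by_cases hj : j < k
    · rw [if_pos hj, if_pos (Fin.lt_def.mp hj), if_pos (Fin.lt_def.mp hj)]
      ring
    · rw [if_neg hj, if_neg (fun h => hj (Fin.lt_def.mpr h)),
        if_neg (fun h => hj (Fin.lt_def.mpr h))]
      ring
  rw [Finset.sum_congr rfl (fun j _ => expand j), Finset.sum_sub_distrib, ← Finset.sum_div]
  rfl

lemma PF_zero (ρ b : Fin N → ℝ) (W0 : ℝ) (i : Fin N) (x : ℝ) : PF ρ b W0 i x 0 = 0 := by
  unfold PF; simp

lemma QF_zero (ρ b : Fin N → ℝ) (W0 : ℝ) (i : Fin N) (x : ℝ) : QF ρ b W0 i x 0 = 0 := by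
  unfold QF; simp

lemma PF_succ (ρ b : Fin N → ℝ) (W0 : ℝ) (i : Fin N) (x : ℝ) {n : ℕ} (hn : n < N) :
    PF ρ b W0 i x (n + 1) = PF ρ b W0 i x n
      + ρ ⟨n, hn⟩ * classW ρ (Function.update b i x) W0 ⟨n, hn⟩ :=
  sum_if_lt_succ _ hn

lemma QF_succ (ρ b : Fin N → ℝ) (W0 : ℝ) (i : Fin N) (x : ℝ) {n : ℕ} (hn : n < N) :
    QF ρ b W0 i x (n + 1) = QF ρ b W0 i x n
      + ρ ⟨n, hn⟩ * b ⟨n, hn⟩ * classW ρ (Function.update b i x) W0 ⟨n, hn⟩ :=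
  sum_if_lt_succ _ hn

/-- the conservation identity `(1-σ_n)(V - P_n) = W0 + Q_n T_n`. -/
lemma Jlem (ρ b : Fin N → ℝ) (W0 : ℝ) (i : Fin N) (hρsum : ∑ k, ρ k < 1)
    (hbpos : ∀ k, 0 < b k) :
    ∀ n : ℕ, n ≤ i.val → ∀ x : ℝ, x ≠ 0 → (∀ j : Fin N, j.val < n → dF ρ b i x j ≠ 0) →
    (1 - sig ρ n) * (W0 / (1 - ∑ m, ρ m) - PF ρ b W0 i x n)
      = W0 + QF ρ b W0 i x n * (ρ i / x + sml ρ b i n) := by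
  intro n
  induction n with
  | zero =>
    intro _ x hx _
    rw [PF_zero, QF_zero, sig_zero, zero_mul, add_zero, sub_zero]
    have h1 : (1:ℝ) - ∑ m, ρ m ≠ 0 := by
      intro hc
      rw [sub_eq_zero] at hc
      rw [← hc] at hρsum
      exact lt_irrefl _ hρsum
    field_simp
  | succ n ih =>
    intro hn1 x hx hd
    have hnN : n < N := by
      have := i.isLt
      omega
    have hκi : (⟨n, hnN⟩ : Fin N) < i := Fin.lt_def.mpr (by simpa using hn1)
    have hκne : (⟨n, hnN⟩ : Fin N) ≠ i := ne_of_lt hκi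
    have hdk : dF ρ b i x ⟨n, hnN⟩ ≠ 0 := hd _ (by simp)
    have hW : classW ρ (Function.update b i x) W0 ⟨n, hnN⟩ * dF ρ b i x ⟨n, hnN⟩
        = W0 / (1 - ∑ m, ρ m) - (PF ρ b W0 i x n - QF ρ b W0 i x n / b ⟨n, hnN⟩) := by
      rw [W_eq ρ b W0 i hκi, div_mul_cancel₀ _ hdk, numalg ρ b W0 i x ⟨n, hnN⟩]
    have hd_expand : dF ρ b i x ⟨n, hnN⟩
        = 1 - sig ρ (n + 1) + b ⟨n, hnN⟩ * (ρ i / x + sml ρ b i (n + 1)) := by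
      unfold dF gF
      have h1 : sig ρ n = sig ρ (n+1) + ρ ⟨n, hnN⟩ := sig_succ ρ hnN
      have h2 : sml ρ b i n = sml ρ b i (n+1) + ρ ⟨n, hnN⟩ / b ⟨n, hnN⟩ :=
        sml_succ ρ b i hnN hκne
      have hb0 : b ⟨n, hnN⟩ ≠ 0 := ne_of_gt (hbpos _)
      rw [show (⟨n, hnN⟩ : Fin N).val = n from rfl, h1, h2]
      field_simp
      ring
    have ihh := ih (by omega) x hx (fun j hj => hd j (by omega))
    rw [sig_succ ρ hnN, sml_succ ρ b i hnN hκne] at ihh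
    rw [PF_succ ρ b W0 i x hnN, QF_succ ρ b W0 i x hnN]
    rw [hd_expand] at hW
    linear_combination ihh - ρ ⟨n, hnN⟩ * hW

end APQaux

namespace APQaux

variable {N : ℕ}

/-- partial-fraction representation of the lower-class waiting times. -/
lemma repr (ρ b : Fin N → ℝ) (W0 : ℝ) (i : Fin N) (hρ : ∀ k, 0 < ρ k)
    (hρsum : ∑ k, ρ k < 1) (hbpos : ∀ k, 0 < b k) (hbmono : StrictMono b) :
    ∀ n : ℕ, ∀ k : Fin N, k.val < n → k < i → ∀ x : ℝ, x ≠ 0 →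
      (∀ m : Fin N, m ≤ k → dF ρ b i x m ≠ 0) →
      classW ρ (Function.update b i x) W0 k
        = ∑ m, if m ≤ k then rr ρ b W0 i k m / dF ρ b i x m else 0 := by
  intro n
  induction n with
  | zero => intro k hk; omega
  | succ n ih =>
    intro k hkn hki x hx hd
    by_cases hlt : k.val < n
    · exact ih k hlt hki x hx hd
    have hkval : k.val = n := by omega
    have hone : (0:ℝ) < 1 - sig ρ k.val := by
      have := sig_lt_one ρ hρ hρsum k.val; linarith
    -- the double-sum swap, at an arbitrary admissible point y
    have key : ∀ (y : ℝ), y ≠ 0 → (∀ m : Fin N, m < k → dF ρ b i y m ≠ 0) →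
        (∑ j, if j < k then ρ j * (1 - b j / b k)
            * classW ρ (Function.update b i y) W0 j else 0)
          = ∑ m, if m < k then SmS ρ b W0 i k m / dF ρ b i y m else 0 := by
      intro y hy hdy
      have step1 : ∀ j : Fin N, j < k →
          classW ρ (Function.update b i y) W0 j
            = ∑ m, if m ≤ j then rr ρ b W0 i j m / dF ρ b i y m else 0 := by
        intro j hj
        exact ih j (by have := Fin.lt_def.mp hj; omega) (lt_trans hj hki) y hy
          (fun m hm => hdy m (lt_of_le_of_lt hm hj))
      have swap1 : (∑ j, if j < k then ρ j * (1 - b j / b k)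
            * classW ρ (Function.update b i y) W0 j else 0)
          = ∑ j, ∑ m, (if m ≤ j ∧ j < k then
              ρ j * (1 - b j / b k) * rr ρ b W0 i j m / dF ρ b i y m else 0) := by
        apply Finset.sum_congr rfl
        intro j _
        by_cases hj : j < k
        · rw [if_pos hj, step1 j hj, Finset.mul_sum]
          apply Finset.sum_congr rfl
          intro m _
          by_cases hm : m ≤ j
          · rw [if_pos hm, if_pos ⟨hm, hj⟩]
            ring
          · rw [if_neg hm, if_neg (by tauto), mul_zero]
        · rw [if_neg hj, eq_comm]
          apply Finset.sum_eq_zero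
          intro m _
          rw [if_neg (by tauto)]
      rw [swap1, Finset.sum_comm]
      apply Finset.sum_congr rfl
      intro m _
      by_cases hm : m < k
      · rw [if_pos hm]
        unfold SmS
        rw [Finset.sum_div]
        apply Finset.sum_congr rfl
        intro j _
        by_cases hc : m ≤ j ∧ j < k
        · rw [if_pos hc, if_pos hc]
        · rw [if_neg hc, if_neg hc, zero_div]
      · rw [if_neg hm]
        apply Finset.sum_eq_zero
        intro j _
        rw [if_neg (fun hc => hm (lt_of_le_of_lt hc.1 hc.2))]
    -- evaluation point
    have hgk := gF_pos ρ b i hρ hρsum hbpos k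
    have hbk := hbpos k
    have hρi := hρ i
    set xs : ℝ := -(ρ i * b k) / gF ρ b i k with hxs_def
    have hxs : xs ≠ 0 := by
      rw [hxs_def]
      apply ne_of_lt
      apply div_neg_of_neg_of_pos _ hgk
      nlinarith
    have hdxs : ∀ m : Fin N, m < k →
        dF ρ b i xs m = (b k * gF ρ b i m - b m * gF ρ b i k) / b k := by
      intro m hm
      unfold dF
      rw [hxs_def]
      have h1 : gF ρ b i k ≠ 0 := ne_of_gt hgk
      have h2 : b k ≠ 0 := ne_of_gt hbk
      have h3 : ρ i ≠ 0 := ne_of_gt hρi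
      field_simp
      ring
    have hdxs_ne : ∀ m : Fin N, m < k → dF ρ b i xs m ≠ 0 := by
      intro m hm
      rw [hdxs m hm]
      exact ne_of_gt (div_pos (Gamma_pos ρ b i hρ hρsum hbpos hbmono hm hki.le) hbk)
    -- J-identity at the evaluation point
    have hrx : ρ i / xs + sml ρ b i k.val = -(1 - sig ρ k.val) / b k := by
      rw [hxs_def]
      have h1 : gF ρ b i k ≠ 0 := ne_of_gt hgk
      have h2 : b k ≠ 0 := ne_of_gt hbk
      have h3 : ρ i ≠ 0 := ne_of_gt hρi
      have hgdef : gF ρ b i k = 1 - sig ρ k.val + b k * sml ρ b i k.val := rfl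
      have hq : ρ i / (-(ρ i * b k) / gF ρ b i k) = -(gF ρ b i k) / b k := by
        rw [div_div_eq_mul_div, div_eq_div_iff (by simpa using (mul_pos hρi hbk).ne') h2]
        ring
      rw [hq, hgdef]
      field_simp
      ring
    have hJ := Jlem ρ b W0 i hρsum hbpos k.val (Fin.lt_def.mp hki).le xs hxs
      (fun j hj => hdxs_ne j (Fin.lt_def.mpr hj))
    rw [hrx] at hJ
    have hnum_xs : W0 / (1 - ∑ m, ρ m)
        - (PF ρ b W0 i xs k.val - QF ρ b W0 i xs k.val / b k)
        = W0 / (1 - sig ρ k.val) := by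
      rw [eq_div_iff (ne_of_gt hone)]
      have h2 : b k ≠ 0 := ne_of_gt hbk
      field_simp at hJ ⊢
      linear_combination hJ
    -- the constant identity
    have hconst : (∑ m, if m < k then b k * SmS ρ b W0 i k m
          / (b k * gF ρ b i m - b m * gF ρ b i k) else 0)
        = W0 / (1 - ∑ m, ρ m) - W0 / (1 - sig ρ k.val) := by
      have e1 : (∑ m, if m < k then SmS ρ b W0 i k m / dF ρ b i xs m else 0)
          = ∑ m, if m < k then b k * SmS ρ b W0 i k m
              / (b k * gF ρ b i m - b m * gF ρ b i k) else 0 := by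
        apply Finset.sum_congr rfl
        intro m _
        by_cases hm : m < k
        · rw [if_pos hm, if_pos hm, hdxs m hm, div_div_eq_mul_div]
          ring
        · rw [if_neg hm, if_neg hm]
      rw [← e1, ← key xs hxs hdxs_ne, numalg ρ b W0 i xs k]
      linarith [hnum_xs]
    -- main computation at x
    have hdkx : dF ρ b i x k ≠ 0 := hd k le_rfl
    have hdx_ne : ∀ m : Fin N, m < k → dF ρ b i x m ≠ 0 := fun m hm => hd m hm.le
    rw [W_eq ρ b W0 i hki, key x hx hdx_ne, sum_if_le_split
      (fun m => rr ρ b W0 i k m / dF ρ b i x m) k]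
    have perm : ∀ m : Fin N, m < k →
        SmS ρ b W0 i k m / dF ρ b i x m
          = b k * SmS ρ b W0 i k m / (b k * gF ρ b i m - b m * gF ρ b i k)
            - rr ρ b W0 i k m * (dF ρ b i x k / dF ρ b i x m) := by
      intro m hm
      have hΓ : b k * dF ρ b i x m - b m * dF ρ b i x k
          = b k * gF ρ b i m - b m * gF ρ b i k := by
        unfold dF
        ring
      have hΓpos := Gamma_pos ρ b i hρ hρsum hbpos hbmono hm hki.le
      have hΓne : b k * gF ρ b i m - b m * gF ρ b i k ≠ 0 := ne_of_gt hΓpos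
      have hdm := hdx_ne m hm
      rw [rr_lt ρ b W0 i hm]
      have hstep : b k * SmS ρ b W0 i k m / (b k * gF ρ b i m - b m * gF ρ b i k)
          - b m * SmS ρ b W0 i k m / (b k * gF ρ b i m - b m * gF ρ b i k)
            * (dF ρ b i x k / dF ρ b i x m)
          = SmS ρ b W0 i k m * (b k * dF ρ b i x m - b m * dF ρ b i x k)
            / ((b k * gF ρ b i m - b m * gF ρ b i k) * dF ρ b i x m) := by
        field_simp
      rw [hstep, hΓ, mul_comm (b k * gF ρ b i m - b m * gF ρ b i k) (dF ρ b i x m),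
        mul_div_mul_right _ _ hΓne]
    have sumsplit : (∑ m, if m < k then SmS ρ b W0 i k m / dF ρ b i x m else 0)
        = (∑ m, if m < k then b k * SmS ρ b W0 i k m
            / (b k * gF ρ b i m - b m * gF ρ b i k) else 0)
          - dF ρ b i x k * (∑ m, if m < k then rr ρ b W0 i k m / dF ρ b i x m else 0) := by
      rw [Finset.mul_sum, ← Finset.sum_sub_distrib]
      apply Finset.sum_congr rfl
      intro m _
      by_cases hm : m < k
      · rw [if_pos hm, if_pos hm, if_pos hm, perm m hm]
        ring
      · rw [if_neg hm, if_neg hm, if_neg hm, mul_zero, sub_zero]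
    rw [sumsplit, hconst, rr_diag]
    field_simp
    ring

lemma rr_nonneg (ρ b : Fin N → ℝ) (W0 : ℝ) (i : Fin N) (hρ : ∀ k, 0 < ρ k)
    (hρsum : ∑ k, ρ k < 1) (hW0 : 0 < W0) (hbpos : ∀ k, 0 < b k) (hbmono : StrictMono b) :
    ∀ n : ℕ, ∀ k : Fin N, k.val < n → k < i → ∀ m : Fin N, 0 ≤ rr ρ b W0 i k m := by
  intro n
  induction n with
  | zero => intro k hk; omega
  | succ n ih =>
    intro k hkn hki m
    by_cases hlt : k.val < n
    · exact ih k hlt hki m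
    by_cases hmk : m < k
    · rw [rr_lt ρ b W0 i hmk]
      apply div_nonneg _ (Gamma_pos ρ b i hρ hρsum hbpos hbmono hmk hki.le).le
      apply mul_nonneg (hbpos m).le
      apply Finset.sum_nonneg
      intro j _
      by_cases hc : m ≤ j ∧ j < k
      · rw [if_pos hc]
        have h1 : 0 ≤ rr ρ b W0 i j m :=
          ih j (by have := Fin.lt_def.mp hc.2; omega) (lt_trans hc.2 hki) m
        have h2 : b j < b k := hbmono hc.2
        have h3 : b j / b k < 1 := (div_lt_one (hbpos k)).mpr h2
        have h4 : 0 ≤ 1 - b j / b k := by linarith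
        exact mul_nonneg (mul_nonneg (hρ j).le h4) h1
      · rw [if_neg hc]
    · by_cases hmk2 : m = k
      · subst hmk2
        rw [rr_diag]
        apply div_nonneg hW0.le
        have := sig_lt_one ρ hρ hρsum m.val
        linarith
      · rw [rr_gt]
        intro h
        rcases lt_or_eq_of_le h with h' | h'
        exacts [hmk h', hmk2 h']

end APQaux

namespace APQaux

variable {N : ℕ}

lemma Qdiv_mono (ρ b : Fin N → ℝ) (W0 : ℝ) (i : Fin N) (hρ : ∀ k, 0 < ρ k)
    (hρsum : ∑ k, ρ k < 1) (hW0 : 0 < W0) (hbpos : ∀ k, 0 < b k) (hbmono : StrictMono b)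
    {s t : ℝ} (hs : 0 < s) (hst : s < t) :
    QF ρ b W0 i t i.val / t ^ 2 ≤ QF ρ b W0 i s i.val / s ^ 2 := by
  have ht : 0 < t := hs.trans hst
  have hWmono : ∀ j : Fin N, j < i →
      classW ρ (Function.update b i t) W0 j / t ^ 2
        ≤ classW ρ (Function.update b i s) W0 j / s ^ 2 := by
    intro j hj
    have hds : ∀ m : Fin N, m ≤ j → dF ρ b i s m ≠ 0 :=
      fun m _ => (dF_pos ρ b i hρ hρsum hbpos hs m).ne'
    have hdt : ∀ m : Fin N, m ≤ j → dF ρ b i t m ≠ 0 :=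
      fun m _ => (dF_pos ρ b i hρ hρsum hbpos ht m).ne'
    rw [repr ρ b W0 i hρ hρsum hbpos hbmono (j.val+1) j (by omega) hj s hs.ne' hds,
      repr ρ b W0 i hρ hρsum hbpos hbmono (j.val+1) j (by omega) hj t ht.ne' hdt,
      Finset.sum_div, Finset.sum_div]
    apply Finset.sum_le_sum
    intro m _
    by_cases hm : m ≤ j
    · rw [if_pos hm, if_pos hm]
      have hrr := rr_nonneg ρ b W0 i hρ hρsum hW0 hbpos hbmono (j.val+1) j (by omega) hj m
      have hgm := gF_pos ρ b i hρ hρsum hbpos m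
      have hcb : 0 < ρ i * b m := mul_pos (hρ i) (hbpos m)
      have e1 : dF ρ b i s m * s ^ 2 = gF ρ b i m * s ^ 2 + ρ i * b m * s := by
        unfold dF; field_simp
      have e2 : dF ρ b i t m * t ^ 2 = gF ρ b i m * t ^ 2 + ρ i * b m * t := by
        unfold dF; field_simp
      rw [div_div, div_div, e1, e2]
      have hpos : 0 < gF ρ b i m * s ^ 2 + ρ i * b m * s := by positivity
      have hle : gF ρ b i m * s ^ 2 + ρ i * b m * s ≤ gF ρ b i m * t ^ 2 + ρ i * b m * t := by
        nlinarith [mul_nonneg hgm.le (mul_nonneg (sub_nonneg.mpr hst.le)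
          (by linarith : (0:ℝ) ≤ t + s)), mul_nonneg hcb.le (sub_nonneg.mpr hst.le)]
      exact div_le_div_of_nonneg_left hrr hpos hle
    · rw [if_neg hm, if_neg hm, zero_div, zero_div]
  have hform : ∀ (x : ℝ), x ≠ 0 → QF ρ b W0 i x i.val / x ^ 2
      = ∑ j, if j.val < i.val then
          ρ j * b j * (classW ρ (Function.update b i x) W0 j / x ^ 2) else 0 := by
    intro x hx
    unfold QF
    rw [Finset.sum_div]
    apply Finset.sum_congr rfl
    intro j _
    by_cases hj : j.val < i.val
    · rw [if_pos hj, if_pos hj]; ring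
    · rw [if_neg hj, if_neg hj, zero_div]
  rw [hform t ht.ne', hform s hs.ne']
  apply Finset.sum_le_sum
  intro j _
  by_cases hj : j.val < i.val
  · rw [if_pos hj, if_pos hj]
    exact mul_le_mul_of_nonneg_left (hWmono j (Fin.lt_def.mpr hj))
      (mul_nonneg (hρ j).le (hbpos j).le)
  · rw [if_neg hj, if_neg hj]

/-- The first-order condition at a positive bid forces the normalized equation `G x = 1`. -/
lemma foc_G (ρ b C : Fin N → ℝ) (W0 : ℝ) (i : Fin N) (hρ : ∀ k, 0 < ρ k)
    (hρsum : ∑ k, ρ k < 1) (hbpos : ∀ k, 0 < b k) (hC : ∀ k, 0 < C k)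
    {x : ℝ} (hx : 0 < x)
    (hfoc : classW ρ (Function.update b i x) W0 i = tildeW ρ (Function.update b i x) C W0 i) :
    C i * W0 / (1 - sig ρ i.val)
        * ((ρ i / x + sml ρ b i i.val) / (1 - sig ρ i.val + ρ i + sml ρ b i i.val * x) ^ 2)
      + C i / (1 - sig ρ i.val) * (QF ρ b W0 i x i.val / x ^ 2) = 1 := by
  have hxne : x ≠ 0 := hx.ne'
  have ha : (0:ℝ) < 1 - sig ρ i.val := by
    have := sig_lt_one ρ hρ hρsum i.val; linarith
  have hsl : 0 ≤ sml ρ b i i.val := sml_nonneg ρ b i hρ hbpos i.val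
  have hρi := hρ i
  have hD : (0:ℝ) < 1 - sig ρ i.val + ρ i + sml ρ b i i.val * x := by nlinarith
  have hT : (0:ℝ) < ρ i / x + sml ρ b i i.val := by
    have : 0 < ρ i / x := div_pos hρi hx
    linarith
  have hCi := hC i
  have hJ := Jlem ρ b W0 i hρsum hbpos i.val le_rfl x hxne
    (fun j _ => (dF_pos ρ b i hρ hρsum hbpos hx j).ne')
  rw [Wi_eq ρ b W0 i hxne, tW_eq ρ b C W0 i hxne] at hfoc
  rw [div_eq_div_iff (ne_of_gt hD) (ne_of_gt (mul_pos hCi hT))] at hfoc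
  set a := 1 - sig ρ i.val with ha_def
  set sl := sml ρ b i i.val with hsl_def
  set P := PF ρ b W0 i x i.val with hP_def
  set Q := QF ρ b W0 i x i.val with hQ_def
  set V := W0 / (1 - ∑ m, ρ m) with hV_def
  rw [show (1:ℝ) - (sig ρ i.val - x * sl - ρ i) = a + ρ i + sl * x from by
    rw [ha_def]; ring] at hfoc
  field_simp at hfoc hJ
  have key2 : C i * W0 * ((ρ i + sl * x) * x ^ 3) + C i * Q * ((a + ρ i + sl * x) ^ 2 * x ^ 2)
      = a * (a + ρ i + sl * x) ^ 2 * x ^ 4 := by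
    linear_combination x ^ 2 * (a * hfoc - C i * (ρ i + sl * x) * hJ)
  have hrw : C i * W0 / a * ((ρ i / x + sl) / (a + ρ i + sl * x) ^ 2) + C i / a * (Q / x ^ 2)
      = (C i * W0 * ((ρ i + sl * x) * x ^ 3) + C i * Q * ((a + ρ i + sl * x) ^ 2 * x ^ 2))
        / (a * (a + ρ i + sl * x) ^ 2 * x ^ 4) := by
    field_simp
  rw [hrw, key2, div_self (by positivity)]
end APQaux

namespace APQaux

variable {N : ℕ}

lemma G_strictAnti (ρ b C : Fin N → ℝ) (W0 : ℝ) (i : Fin N) (hρ : ∀ k, 0 < ρ k)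
    (hρsum : ∑ k, ρ k < 1) (hW0 : 0 < W0) (hbpos : ∀ k, 0 < b k) (hbmono : StrictMono b)
    (hC : ∀ k, 0 < C k) {s t : ℝ} (hs : 0 < s) (hst : s < t) :
    C i * W0 / (1 - sig ρ i.val)
        * ((ρ i / t + sml ρ b i i.val) / (1 - sig ρ i.val + ρ i + sml ρ b i i.val * t) ^ 2)
      + C i / (1 - sig ρ i.val) * (QF ρ b W0 i t i.val / t ^ 2)
    < C i * W0 / (1 - sig ρ i.val)
        * ((ρ i / s + sml ρ b i i.val) / (1 - sig ρ i.val + ρ i + sml ρ b i i.val * s) ^ 2)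
      + C i / (1 - sig ρ i.val) * (QF ρ b W0 i s i.val / s ^ 2) := by
  have ht : 0 < t := hs.trans hst
  have ha : (0:ℝ) < 1 - sig ρ i.val := by
    have := sig_lt_one ρ hρ hρsum i.val; linarith
  have hsl : 0 ≤ sml ρ b i i.val := sml_nonneg ρ b i hρ hbpos i.val
  have hρi := hρ i
  have hCi := hC i
  set sl := sml ρ b i i.val
  set a := 1 - sig ρ i.val
  have hDs : (0:ℝ) < a + ρ i + sl * s := by nlinarith
  have hDt : (0:ℝ) < a + ρ i + sl * t := by nlinarith
  have hTt : (0:ℝ) < ρ i / t + sl := by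
    have : 0 < ρ i / t := div_pos hρi ht
    linarith
  have hTts : ρ i / t + sl < ρ i / s + sl := by
    have : ρ i / t < ρ i / s := div_lt_div_of_pos_left hρi hs hst
    linarith
  have hDle : (a + ρ i + sl * s) ^ 2 ≤ (a + ρ i + sl * t) ^ 2 := by
    have h1 : a + ρ i + sl * s ≤ a + ρ i + sl * t := by nlinarith
    nlinarith
  have hfrac : (ρ i / t + sl) / (a + ρ i + sl * t) ^ 2
      < (ρ i / s + sl) / (a + ρ i + sl * s) ^ 2 := by
    calc (ρ i / t + sl) / (a + ρ i + sl * t) ^ 2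
        ≤ (ρ i / t + sl) / (a + ρ i + sl * s) ^ 2 :=
          div_le_div_of_nonneg_left hTt.le (by positivity) hDle
      _ < (ρ i / s + sl) / (a + ρ i + sl * s) ^ 2 := by
          apply div_lt_div_of_pos_right hTts (by positivity)
  have hQ := Qdiv_mono ρ b W0 i hρ hρsum hW0 hbpos hbmono hs hst
  have hc1 : (0:ℝ) < C i * W0 / a := by positivity
  have hc2 : (0:ℝ) < C i / a := by positivity
  have h1 : C i * W0 / a * ((ρ i / t + sl) / (a + ρ i + sl * t) ^ 2)
      < C i * W0 / a * ((ρ i / s + sl) / (a + ρ i + sl * s) ^ 2) :=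
    mul_lt_mul_of_pos_left hfrac hc1
  have h2 : C i / a * (QF ρ b W0 i t i.val / t ^ 2)
      ≤ C i / a * (QF ρ b W0 i s i.val / s ^ 2) :=
    mul_le_mul_of_nonneg_left hQ hc2.le
  linarith

end APQaux


/-- Uniqueness of the within-interval solution to the first-order condition:
for a strictly ordered positive bid profile, there is at most one value
`t ∈ (b_{i-1}, b_{i+1})` (with `b_0 := 0`, `b_{N+1} := ∞`) such that the
perturbed profile with `b_i` replaced by `t` satisfies `W_i = W̃_i`.
Membership of `x` in the interval is expressed by `0 < x`, `b j < x` for all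
`j < i`, and `x < b j` for all `j > i`. -/
theorem first_order_condition_unique_solution (N : ℕ) (hN : 1 ≤ N)
    (ρ b C : Fin N → ℝ) (W0 : ℝ) (i : Fin N)
    (hρ : ∀ k, 0 < ρ k) (hρsum : ∑ k, ρ k < 1) (hW0 : 0 < W0)
    (hbpos : ∀ k, 0 < b k) (hbmono : StrictMono b) (hC : ∀ k, 0 < C k) :
    ∀ s t : ℝ,
      (0 < s ∧ (∀ j : Fin N, j < i → b j < s) ∧ (∀ j : Fin N, i < j → s < b j)) →
      (0 < t ∧ (∀ j : Fin N, j < i → b j < t) ∧ (∀ j : Fin N, i < j → t < b j)) →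
      classW ρ (Function.update b i s) W0 i = tildeW ρ (Function.update b i s) C W0 i →
      classW ρ (Function.update b i t) W0 i = tildeW ρ (Function.update b i t) C W0 i →
      s = t := by
  intro s t hs ht hfs hft
  have G1 := APQaux.foc_G ρ b C W0 i hρ hρsum hbpos hC hs.1 hfs
  have G2 := APQaux.foc_G ρ b C W0 i hρ hρsum hbpos hC ht.1 hft
  rcases lt_trichotomy s t with h | h | h
  · exfalso
    have := APQaux.G_strictAnti ρ b C W0 i hρ hρsum hW0 hbpos hbmono hC hs.1 h
    rw [G1, G2] at this
    exact lt_irrefl 1 this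
  · exact h
  · exfalso
    have := APQaux.G_strictAnti ρ b C W0 i hρ hρsum hW0 hbpos hbmono hC ht.1 h
    rw [G1, G2] at this
    exact lt_irrefl 1 this
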